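/- (Deterministic form of Lemma 2.4, null case.) For every fixed z ∈ ℝ, β > 0 and r ≥ 1: lim_{n→∞} n^{r+1/2} · BF₁₀(z | βn, r) = β^{−(r+1/2)} · ₁F₁(r+1/2, 1/2; z²/2). In particular, BF₁₀(z|βn,r) = O(n^{−(r+1/2)}) as n → ∞. -/

import Mathlib

open Real MeasureTheory Filter Asymptotics

/-- Rising factorial (Pochhammer symbol) `(a)_k`. -/
noncomputable def risingFac (a : ℝ) (k : ℕ) : ℝ := (ascPochhammer ℝ k).eval a

/-- Confluent hypergeometric function `₁F₁(a, b; x)`. -/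
noncomputable def oneF1 (a b x : ℝ) : ℝ :=
  ∑' k : ℕ, (risingFac a k / risingFac b k) * x ^ k / (Nat.factorial k : ℝ)

/-- Two-sided `z` Bayes factor `BF₁₀(z | τ², r)` as a function of `τ² = τsq`. -/
noncomputable def BF10z (z τsq r : ℝ) : ℝ :=
  (1 + τsq) ^ (-(r + 1 / 2)) *
    oneF1 (r + 1 / 2) (1 / 2) (τsq * z ^ 2 / (2 * (1 + τsq)))

lemma risingFac_pos {a : ℝ} (ha : 0 < a) (k : ℕ) : 0 < risingFac a k :=
  ascPochhammer_pos k a ha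

lemma risingFac_succ (a : ℝ) (k : ℕ) :
    risingFac a (k + 1) = risingFac a k * (a + k) := ascPochhammer_succ_eval k a

lemma term_nonneg {a b : ℝ} (ha : 0 < a) (hb : 0 < b) {x : ℝ} (hx : 0 ≤ x) (k : ℕ) :
    0 ≤ risingFac a k / risingFac b k * x ^ k / (Nat.factorial k : ℝ) := by
  apply div_nonneg _ (by positivity)
  exact mul_nonneg (div_nonneg (risingFac_pos ha k).le (risingFac_pos hb k).le) (by positivity)

lemma summable_oneF1 {a b M : ℝ} (ha : 0 < a) (hb : 0 < b) (hM : 0 ≤ M) :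
    Summable (fun k : ℕ => risingFac a k / risingFac b k * M ^ k / (Nat.factorial k : ℝ)) := by
  refine summable_of_ratio_norm_eventually_le (r := 1/2) (by norm_num) ?_
  have hev : ∀ᶠ k : ℕ in atTop, 2 * (a + 1) * M ≤ (k : ℝ) + 1 ∧ 1 ≤ k :=
    (eventually_atTop.2 ⟨⌈2 * (a + 1) * M⌉₊ + 1, fun k hk => by
      constructor
      · have h1 : 2 * (a + 1) * M ≤ (⌈2 * (a + 1) * M⌉₊ : ℝ) := Nat.le_ceil _
        have h2 : ((⌈2 * (a + 1) * M⌉₊ : ℕ) : ℝ) ≤ (k : ℝ) := by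
          exact_mod_cast le_trans (Nat.le_succ _) hk
        linarith
      · omega⟩)
  filter_upwards [hev] with k hk
  obtain ⟨hk1, hk2⟩ := hk
  have hkR : (1 : ℝ) ≤ (k : ℝ) := by exact_mod_cast hk2
  have hQ : 0 < risingFac b k := risingFac_pos hb k
  have hbk : (0 : ℝ) < b + k := by linarith
  have hk1' : (0 : ℝ) < (k : ℝ) + 1 := by linarith
  have hfac : (0 : ℝ) < (Nat.factorial k : ℝ) := by positivity
  have key : risingFac a (k+1) / risingFac b (k+1) * M ^ (k+1) / (Nat.factorial (k+1) : ℝ)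
      = (risingFac a k / risingFac b k * M ^ k / (Nat.factorial k : ℝ)) *
        ((a + k) / (b + k) * (M / ((k : ℝ) + 1))) := by
    rw [risingFac_succ, risingFac_succ, pow_succ, Nat.factorial_succ, Nat.cast_mul,
      Nat.cast_add, Nat.cast_one]
    field_simp
  have hratio : (a + k) / (b + k) * (M / ((k : ℝ) + 1)) ≤ 1/2 := by
    have h1 : (a + k) / (b + k) ≤ a + 1 := by
      rw [div_le_iff₀ hbk]; nlinarith
    have h2 : 0 ≤ M / ((k : ℝ) + 1) := div_nonneg hM hk1'.le
    have h3 : (a + k) / (b + k) * (M / ((k : ℝ) + 1)) ≤ (a + 1) * (M / ((k : ℝ) + 1)) :=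
      mul_le_mul_of_nonneg_right h1 h2
    have h4 : (a + 1) * (M / ((k : ℝ) + 1)) ≤ 1/2 := by
      rw [mul_div_assoc' , div_le_iff₀ hk1']; nlinarith
    linarith
  rw [Real.norm_eq_abs, Real.norm_eq_abs, abs_of_nonneg (term_nonneg ha hb hM _),
    abs_of_nonneg (term_nonneg ha hb hM _), key, mul_comm (1/2)]
  have hnn := term_nonneg ha hb hM (k := k)
  have hr2 : 0 ≤ (a + k) / (b + k) * (M / ((k : ℝ) + 1)) := by positivity
  exact mul_le_mul_of_nonneg_left hratio hnn

/-- Deterministic form of Lemma 2.4, null case. -/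
theorem lemma24_null (z β r : ℝ) (hβ : 0 < β) (hr : 1 ≤ r) :
    Tendsto (fun n : ℕ => (n : ℝ) ^ (r + 1 / 2) * BF10z z (β * n) r) atTop
      (nhds (β ^ (-(r + 1 / 2)) * oneF1 (r + 1 / 2) (1 / 2) (z ^ 2 / 2))) ∧
    (fun n : ℕ => BF10z z (β * n) r) =O[atTop] fun n : ℕ => (n : ℝ) ^ (-(r + 1 / 2)) := by
  set p : ℝ := r + 1 / 2 with hp
  have hpp : 0 < p := by rw [hp]; linarith
  have ha : 0 < r + 1/2 := by linarith
  have hb : (0 : ℝ) < 1/2 := by norm_num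
  have hden : ∀ n : ℕ, (0 : ℝ) < 1 + β * n := fun n => by positivity
  -- step: n/(1+βn) → β⁻¹
  have hdiv : Tendsto (fun n : ℕ => (n : ℝ) / (1 + β * n)) atTop (nhds β⁻¹) := by
    have h1 : Tendsto (fun n : ℕ => (1 + β * n) / (n : ℝ)) atTop (nhds β) := by
      have h2 : Tendsto (fun n : ℕ => 1 / (n : ℝ) + β) atTop (nhds (0 + β)) :=
        tendsto_one_div_atTop_nhds_zero_nat.add tendsto_const_nhds
      rw [zero_add] at h2
      refine h2.congr' ?_
      filter_upwards [eventually_ge_atTop 1] with n hn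
      have hn0 : (0 : ℝ) < n := by exact_mod_cast hn
      field_simp
    have := h1.inv₀ (ne_of_gt hβ)
    simpa [inv_div] using this
  -- prefactor limit
  have hpre : Tendsto (fun n : ℕ => (n : ℝ) ^ p * (1 + β * n) ^ (-p)) atTop
      (nhds (β ^ (-p))) := by
    have h1 : Tendsto (fun n : ℕ => ((n : ℝ) / (1 + β * n)) ^ p) atTop (nhds (β⁻¹ ^ p)) :=
      hdiv.rpow_const (Or.inl (inv_ne_zero hβ.ne'))
    have h2 : β⁻¹ ^ p = β ^ (-p) := by
      rw [Real.rpow_neg hβ.le, ← Real.inv_rpow hβ.le]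
    rw [h2] at h1
    refine h1.congr' ?_
    filter_upwards [eventually_ge_atTop 1] with n hn
    have hn0 : (0 : ℝ) ≤ n := Nat.cast_nonneg n
    rw [Real.div_rpow hn0 (hden n).le, Real.rpow_neg (hden n).le, div_eq_mul_inv]
  -- argument limit
  have hxval : ∀ n : ℕ, β * n * z ^ 2 / (2 * (1 + β * n)) =
      β * ((n : ℝ) / (1 + β * n)) * (z ^ 2 / 2) := fun n => by
    rw [div_eq_iff (by positivity : (2 * (1 + β * (n:ℝ))) ≠ 0)]
    field_simp
  have hxlim : Tendsto (fun n : ℕ => β * n * z ^ 2 / (2 * (1 + β * n))) atTop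
      (nhds (z ^ 2 / 2)) := by
    have h1 : Tendsto (fun n : ℕ => β * ((n : ℝ) / (1 + β * n)) * (z ^ 2 / 2)) atTop
        (nhds (β * β⁻¹ * (z ^ 2 / 2))) :=
      ((hdiv.const_mul β).mul_const _)
    rw [mul_inv_cancel₀ hβ.ne', one_mul] at h1
    exact h1.congr fun n => (hxval n).symm
  -- bounds on argument
  have hxmem : ∀ n : ℕ, 0 ≤ β * n * z ^ 2 / (2 * (1 + β * n)) ∧
      β * n * z ^ 2 / (2 * (1 + β * n)) ≤ z ^ 2 / 2 := fun n => by
    constructor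
    · positivity
    · rw [hxval n]
      have h1 : (n : ℝ) / (1 + β * n) ≤ β⁻¹ := by
        rw [div_le_iff₀ (hden n), inv_mul_eq_div, le_div_iff₀ hβ]
        nlinarith [Nat.cast_nonneg (α := ℝ) n]
      have h2 : β * ((n : ℝ) / (1 + β * n)) ≤ 1 := by
        calc β * ((n : ℝ) / (1 + β * n)) ≤ β * β⁻¹ :=
              mul_le_mul_of_nonneg_left h1 hβ.le
          _ = 1 := mul_inv_cancel₀ hβ.ne'
      nlinarith [sq_nonneg z, mul_nonneg hβ.le (Nat.cast_nonneg (α := ℝ) n),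
        div_nonneg (mul_nonneg hβ.le (Nat.cast_nonneg (α := ℝ) n)) (hden n).le]
  -- oneF1 limit via dominated convergence
  have hF : Tendsto (fun n : ℕ => oneF1 (r + 1/2) (1/2) (β * n * z ^ 2 / (2 * (1 + β * n))))
      atTop (nhds (oneF1 (r + 1/2) (1/2) (z ^ 2 / 2))) := by
    unfold oneF1
    refine tendsto_tsum_of_dominated_convergence
      (bound := fun k : ℕ => risingFac (r+1/2) k / risingFac (1/2) k * (z^2/2) ^ k /
        (Nat.factorial k : ℝ))
      (summable_oneF1 ha hb (by positivity)) (fun k => ?_) ?_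
    · exact ((hxlim.pow k).const_mul _).div_const _
    · filter_upwards with n k
      rw [Real.norm_eq_abs, abs_of_nonneg (term_nonneg ha hb (hxmem n).1 k)]
      have hc : 0 ≤ risingFac (r+1/2) k / risingFac (1/2) k :=
        div_nonneg (risingFac_pos ha k).le (risingFac_pos hb k).le
      have hpow : (β * n * z ^ 2 / (2 * (1 + β * n))) ^ k ≤ (z^2/2) ^ k :=
        pow_le_pow_left₀ (hxmem n).1 (hxmem n).2 k
      have hfac : (0:ℝ) < (Nat.factorial k : ℝ) := by positivity
      exact div_le_div_of_nonneg_right (mul_le_mul_of_nonneg_left hpow hc) hfac.le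
  -- assemble first part
  have hmain : Tendsto (fun n : ℕ => (n : ℝ) ^ p * BF10z z (β * n) r) atTop
      (nhds (β ^ (-p) * oneF1 (r + 1/2) (1/2) (z ^ 2 / 2))) := by
    have := hpre.mul hF
    refine this.congr fun n => ?_
    simp only [BF10z]
    push_cast
    ring
  refine ⟨hmain, ?_⟩
  -- big-O part
  have hO1 : (fun n : ℕ => (n : ℝ) ^ p * BF10z z (β * n) r) =O[atTop]
      (fun _ : ℕ => (1 : ℝ)) := hmain.isBigO_one ℝ
  have hO2 : (fun n : ℕ => ((n : ℝ) ^ p * BF10z z (β * n) r) * (n : ℝ) ^ (-p)) =O[atTop]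
      (fun n : ℕ => (n : ℝ) ^ (-p)) := by
    simpa using hO1.mul (isBigO_refl (fun n : ℕ => (n : ℝ) ^ (-p)) atTop)
  refine (Filter.EventuallyEq.trans_isBigO ?_ hO2)
  filter_upwards [eventually_ge_atTop 1] with n hn
  have hn0 : (0 : ℝ) < n := by exact_mod_cast hn
  rw [mul_comm ((n:ℝ)^p) _, mul_assoc, ← Real.rpow_add hn0, add_neg_cancel, Real.rpow_zero,
    mul_one]
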